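/- Any stationary one-dependent binary process is invariant under time reversal: P(X_1=t_1, ..., X_n=t_n) = P(X_1=t_n, ..., X_n=t_1) for all binary strings (t_1,...,t_n). -/

import Mathlib

open MeasureTheory ProbabilityTheory

namespace OneDepRev

variable {Ω : Type*} [MeasurableSpace Ω] (μ : Measure Ω) (X : ℕ → Ω → Bool)

noncomputable def P (m : ℕ) (s : ℕ → Bool) : ENNReal :=
  μ {ω | ∀ j, 1 ≤ j → j ≤ m → X j ω = s j}

theorem Pcongr {m : ℕ} {s u : ℕ → Bool} (h : ∀ j, 1 ≤ j → j ≤ m → s j = u j) :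
    P μ X m s = P μ X m u := by
  unfold P
  congr 1
  ext ω
  simp only [Set.mem_setOf_eq]
  constructor
  · intro hw j h1 h2; rw [← h j h1 h2]; exact hw j h1 h2
  · intro hw j h1 h2; rw [h j h1 h2]; exact hw j h1 h2

theorem meas_cyl (hmeas : ∀ i, Measurable (X i)) (m : ℕ) (s : ℕ → Bool) :
    MeasurableSet {ω | ∀ j, 1 ≤ j → j ≤ m → X j ω = s j} := by
  have heq : {ω | ∀ j, 1 ≤ j → j ≤ m → X j ω = s j}
      = ⋂ j : ℕ, {ω | 1 ≤ j → j ≤ m → X j ω = s j} := by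
    ext ω; simp [Set.mem_iInter]
  rw [heq]
  refine MeasurableSet.iInter fun j => ?_
  by_cases h1 : 1 ≤ j ∧ j ≤ m
  · have : {ω | 1 ≤ j → j ≤ m → X j ω = s j} = (X j) ⁻¹' {s j} := by
      ext ω; simp [h1.1, h1.2]
    rw [this]; exact (hmeas j) (measurableSet_singleton _)
  · have : {ω | 1 ≤ j → j ≤ m → X j ω = s j} = Set.univ := by
      ext ω; simp only [Set.mem_setOf_eq, Set.mem_univ, iff_true]
      intro hj1 hj2; exact absurd ⟨hj1, hj2⟩ h1
    rw [this]; exact MeasurableSet.univ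

theorem sum_split (hmeas : ∀ i, Measurable (X i)) {m i : ℕ} (h1 : 1 ≤ i) (h2 : i ≤ m)
    {s : ℕ → Bool} (hs : s i = true) :
    P μ X m s + P μ X m (Function.update s i false)
      = μ {ω | ∀ j, 1 ≤ j → j ≤ m → j ≠ i → X j ω = s j} := by
  unfold P
  have hd : Disjoint {ω | ∀ j, 1 ≤ j → j ≤ m → X j ω = s j}
      {ω | ∀ j, 1 ≤ j → j ≤ m → X j ω = Function.update s i false j} := by
    rw [Set.disjoint_left]
    intro ω hA hB
    have e1 := hA i h1 h2
    have e2 := hB i h1 h2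
    rw [Function.update_self] at e2
    rw [e2, hs] at e1
    exact Bool.false_ne_true e1
  have hu : {ω | ∀ j, 1 ≤ j → j ≤ m → X j ω = s j}
      ∪ {ω | ∀ j, 1 ≤ j → j ≤ m → X j ω = Function.update s i false j}
      = {ω | ∀ j, 1 ≤ j → j ≤ m → j ≠ i → X j ω = s j} := by
    ext ω
    simp only [Set.mem_union, Set.mem_setOf_eq]
    constructor
    · rintro (h | h) j hj1 hj2 hji
      · exact h j hj1 hj2
      · rw [h j hj1 hj2, Function.update_of_ne hji]
    · intro h
      by_cases hv : X i ω = s i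
      · left; intro j hj1 hj2
        by_cases hji : j = i
        · rw [hji]; exact hv
        · exact h j hj1 hj2 hji
      · right; intro j hj1 hj2
        by_cases hji : j = i
        · subst hji
          rw [Function.update_self]
          cases hxv : X j ω
          · rfl
          · exact absurd (hxv.trans hs.symm) hv
        · rw [Function.update_of_ne hji]; exact h j hj1 hj2 hji
  rw [← measure_union hd (meas_cyl X hmeas m _), hu]

theorem shift (hstat : ∀ (k m : ℕ) (t : ℕ → Bool),
      μ {ω | ∀ j, 1 ≤ j → j ≤ m → X j ω = t j}
        = μ {ω | ∀ j, 1 ≤ j → j ≤ m → X (j + k) ω = t j})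
    {m i : ℕ} (s : ℕ → Bool) :
    μ {ω | ∀ j, i + 1 ≤ j → j ≤ m → X j ω = s j} = P μ X (m - i) (fun j => s (j + i)) := by
  unfold P
  rw [hstat i (m - i) (fun j => s (j + i))]
  congr 1
  ext ω
  simp only [Set.mem_setOf_eq]
  constructor
  · intro h j hj1 hj2
    exact h (j + i) (by omega) (by omega)
  · intro h j hj1 hj2
    have := h (j - i) (by omega) (by omega)
    try simp only at this
    rw [show j - i + i = j by omega] at this
    exact this

theorem split (hdep : ∀ i : ℕ, IndepFun
        (fun ω => fun j : {j : ℕ // 1 ≤ j ∧ j < i} => X j.val ω)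
        (fun ω => fun j : {j : ℕ // i < j} => X j.val ω) μ)
    {m i : ℕ} (h1 : 1 ≤ i) (h2 : i ≤ m) (s : ℕ → Bool) :
    μ {ω | ∀ j, 1 ≤ j → j ≤ m → j ≠ i → X j ω = s j}
      = P μ X (i - 1) s * μ {ω | ∀ j, i + 1 ≤ j → j ≤ m → X j ω = s j} := by
  classical
  set S : Set ({j : ℕ // 1 ≤ j ∧ j < i} → Bool) := {v | ∀ p, v p = s p.val} with hS_def
  set T : Set ({j : ℕ // i < j} → Bool) := {v | ∀ p, p.val ≤ m → v p = s p.val} with hT_def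
  have hS : MeasurableSet S := by
    have : S = ⋂ p, (fun v : {j : ℕ // 1 ≤ j ∧ j < i} → Bool => v p) ⁻¹' {s p.val} := by
      ext v; simp [hS_def, Set.mem_iInter]
    rw [this]
    exact MeasurableSet.iInter fun p => (measurable_pi_apply p) (measurableSet_singleton _)
  have hT : MeasurableSet T := by
    have : T = ⋂ p, {v : {j : ℕ // i < j} → Bool | p.val ≤ m → v p = s p.val} := by
      ext v; simp [hT_def, Set.mem_iInter]
    rw [this]
    refine MeasurableSet.iInter fun p => ?_
    by_cases hp : p.val ≤ m
    · have : {v : {j : ℕ // i < j} → Bool | p.val ≤ m → v p = s p.val}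
          = (fun v : {j : ℕ // i < j} → Bool => v p) ⁻¹' {s p.val} := by
        ext v; simp [hp]
      rw [this]
      exact (measurable_pi_apply p) (measurableSet_singleton _)
    · have : {v : {j : ℕ // i < j} → Bool | p.val ≤ m → v p = s p.val} = Set.univ := by
        ext v; simp [hp]
      rw [this]; exact MeasurableSet.univ
  have key := (hdep i).measure_inter_preimage_eq_mul S T hS hT
  have hfS : (fun ω => fun j : {j : ℕ // 1 ≤ j ∧ j < i} => X j.val ω) ⁻¹' S
      = {ω | ∀ j, 1 ≤ j → j ≤ i - 1 → X j ω = s j} := by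
    ext ω
    simp only [Set.mem_preimage, hS_def, Set.mem_setOf_eq]
    constructor
    · intro h j hj1 hj2
      exact h ⟨j, hj1, by omega⟩
    · intro h p
      exact h p.val p.prop.1 (by omega)
  have hfT : (fun ω => fun j : {j : ℕ // i < j} => X j.val ω) ⁻¹' T
      = {ω | ∀ j, i + 1 ≤ j → j ≤ m → X j ω = s j} := by
    ext ω
    simp only [Set.mem_preimage, hT_def, Set.mem_setOf_eq]
    constructor
    · intro h j hj1 hj2
      exact h ⟨j, by omega⟩ hj2
    · intro h p hp
      exact h p.val (by omega) hp
  have hint : (fun ω => fun j : {j : ℕ // 1 ≤ j ∧ j < i} => X j.val ω) ⁻¹' S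
      ∩ (fun ω => fun j : {j : ℕ // i < j} => X j.val ω) ⁻¹' T
      = {ω | ∀ j, 1 ≤ j → j ≤ m → j ≠ i → X j ω = s j} := by
    rw [hfS, hfT]
    ext ω
    simp only [Set.mem_inter_iff, Set.mem_setOf_eq]
    constructor
    · rintro ⟨hl, hr⟩ j hj1 hj2 hji
      rcases lt_or_gt_of_ne hji with h | h
      · exact hl j hj1 (by omega)
      · exact hr j (by omega) hj2
    · intro h
      constructor
      · intro j hj1 hj2
        exact h j hj1 (by omega) (by omega)
      · intro j hj1 hj2
        exact h j (by omega) hj2 (by omega)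
  rw [hint, hfS, hfT] at key
  rw [key]
  rfl

end OneDepRev

/-- A stationary one-dependent binary process is invariant under time reversal:
`P(X_1 = t_1, …, X_n = t_n) = P(X_1 = t_n, …, X_n = t_1)`. -/
theorem one_dependent_time_reversal {Ω : Type*} [MeasurableSpace Ω] (μ : Measure Ω)
    [IsProbabilityMeasure μ] (X : ℕ → Ω → Bool) (hmeas : ∀ i, Measurable (X i))
    (hstat : ∀ (k m : ℕ) (t : ℕ → Bool),
      μ {ω | ∀ j, 1 ≤ j → j ≤ m → X j ω = t j}
        = μ {ω | ∀ j, 1 ≤ j → j ≤ m → X (j + k) ω = t j})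
    (hdep : ∀ i : ℕ, IndepFun
        (fun ω => fun j : {j : ℕ // 1 ≤ j ∧ j < i} => X j.val ω)
        (fun ω => fun j : {j : ℕ // i < j} => X j.val ω) μ)
    (n : ℕ) (t : ℕ → Bool) :
    μ {ω | ∀ j, 1 ≤ j → j ≤ n → X j ω = t j}
      = μ {ω | ∀ j, 1 ≤ j → j ≤ n → X j ω = t (n + 1 - j)} := by
  classical
  suffices h : ∀ N m (s : ℕ → Bool),
      m + ((Finset.Icc 1 m).filter (fun j => s j = true)).card ≤ N →
      OneDepRev.P μ X m s = OneDepRev.P μ X m (fun j => s (m + 1 - j)) by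
    exact h (n + ((Finset.Icc 1 n).filter (fun j => t j = true)).card) n t le_rfl
  intro N
  induction N with
  | zero =>
    intro m s hm
    exact OneDepRev.Pcongr μ X fun j h1 h2 => by omega
  | succ N ih =>
    intro m s hm
    by_cases hex : ∃ i, 1 ≤ i ∧ i ≤ m ∧ s i = true
    · obtain ⟨i, hi1, hi2, hsi⟩ := hex
      have hc : i ∈ (Finset.Icc 1 m).filter (fun j => s j = true) := by
        simp only [Finset.mem_filter, Finset.mem_Icc]
        exact ⟨⟨hi1, hi2⟩, hsi⟩
      -- abbreviations
      set c := ((Finset.Icc 1 m).filter (fun j => s j = true)).card with hc_def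
      have hc1 : 1 ≤ c := Finset.card_pos.mpr ⟨i, hc⟩
      -- bound (a) : left block
      have hba : (i - 1) + ((Finset.Icc 1 (i-1)).filter (fun j => s j = true)).card ≤ N := by
        have hsub : insert i ((Finset.Icc 1 (i-1)).filter (fun j => s j = true))
            ⊆ (Finset.Icc 1 m).filter (fun j => s j = true) := by
          intro x hx
          rcases Finset.mem_insert.mp hx with hx | hx
          · subst hx; exact hc
          · simp only [Finset.mem_filter, Finset.mem_Icc] at hx ⊢
            exact ⟨⟨hx.1.1, by omega⟩, hx.2⟩
        have hni : i ∉ (Finset.Icc 1 (i-1)).filter (fun j => s j = true) := by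
          simp only [Finset.mem_filter, Finset.mem_Icc]
          intro h; omega
        have := Finset.card_le_card hsub
        rw [Finset.card_insert_of_notMem hni] at this
        omega
      -- bound (b) : right block
      have hbb : (m - i) + ((Finset.Icc 1 (m-i)).filter (fun j => s (j+i) = true)).card ≤ N := by
        have himg : insert i (((Finset.Icc 1 (m-i)).filter (fun j => s (j+i) = true)).image (· + i))
            ⊆ (Finset.Icc 1 m).filter (fun j => s j = true) := by
          intro x hx
          rcases Finset.mem_insert.mp hx with hx | hx
          · subst hx; exact hc
          · obtain ⟨y, hy, rfl⟩ := Finset.mem_image.mp hx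
            simp only [Finset.mem_filter, Finset.mem_Icc] at hy ⊢
            exact ⟨⟨by omega, by omega⟩, hy.2⟩
        have hni : i ∉ ((Finset.Icc 1 (m-i)).filter (fun j => s (j+i) = true)).image (· + i) := by
          simp only [Finset.mem_image, Finset.mem_filter, Finset.mem_Icc]
          rintro ⟨y, ⟨⟨hy1, _⟩, _⟩, hy⟩
          omega
        have := Finset.card_le_card himg
        rw [Finset.card_insert_of_notMem hni,
          Finset.card_image_of_injective _ (add_left_injective i)] at this
        omega
      -- bound (c) : flipped bit
      have herase : (Finset.Icc 1 m).filter (fun j => Function.update s i false j = true)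
          = ((Finset.Icc 1 m).filter (fun j => s j = true)).erase i := by
        ext x
        simp only [Finset.mem_filter, Finset.mem_Icc, Finset.mem_erase]
        constructor
        · rintro ⟨hx, hxe⟩
          by_cases hxi : x = i
          · rw [hxi, Function.update_self] at hxe; exact absurd hxe (by simp)
          · rw [Function.update_of_ne hxi] at hxe
            exact ⟨hxi, hx, hxe⟩
        · rintro ⟨hxi, hx, hxe⟩
          rw [Function.update_of_ne hxi]
          exact ⟨hx, hxe⟩
      have hbc : m + ((Finset.Icc 1 m).filter (fun j => Function.update s i false j = true)).card ≤ N := by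
        rw [herase, Finset.card_erase_of_mem hc]
        omega
      -- key identity for s
      have key1 : OneDepRev.P μ X m s + OneDepRev.P μ X m (Function.update s i false)
          = OneDepRev.P μ X (i-1) s * OneDepRev.P μ X (m-i) (fun j => s (j+i)) := by
        rw [OneDepRev.sum_split μ X hmeas hi1 hi2 hsi, OneDepRev.split μ X hdep hi1 hi2 s,
          OneDepRev.shift μ X hstat s]
      -- key identity for the reversal u
      set u : ℕ → Bool := fun j => s (m + 1 - j) with hu_def
      set i' : ℕ := m + 1 - i with hi'_def
      have hi'1 : 1 ≤ i' := by omega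
      have hi'2 : i' ≤ m := by omega
      have hui' : u i' = true := by
        rw [hu_def]
        simp only
        rw [show m + 1 - i' = i by omega]
        exact hsi
      have key2 : OneDepRev.P μ X m u + OneDepRev.P μ X m (Function.update u i' false)
          = OneDepRev.P μ X (i'-1) u * OneDepRev.P μ X (m-i') (fun j => u (j+i')) := by
        rw [OneDepRev.sum_split μ X hmeas hi'1 hi'2 hui', OneDepRev.split μ X hdep hi'1 hi'2 u,
          OneDepRev.shift μ X hstat u]
      -- rewrite the pieces of key2
      have piece1 : OneDepRev.P μ X (i'-1) u = OneDepRev.P μ X (m-i) (fun j => s (j+i)) := by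
        rw [show i' - 1 = m - i by omega]
        have e1 : OneDepRev.P μ X (m-i) u
            = OneDepRev.P μ X (m-i) (fun j => (fun j => s (j+i)) (m - i + 1 - j)) := by
          refine OneDepRev.Pcongr μ X fun j h1 h2 => ?_
          simp only [hu_def]
          congr 1
          omega
        rw [e1, ← ih (m-i) (fun j => s (j+i)) hbb]
      have piece2 : OneDepRev.P μ X (m-i') (fun j => u (j+i')) = OneDepRev.P μ X (i-1) s := by
        rw [show m - i' = i - 1 by omega]
        have e1 : OneDepRev.P μ X (i-1) (fun j => u (j+i'))
            = OneDepRev.P μ X (i-1) (fun j => s (i - 1 + 1 - j)) := by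
          refine OneDepRev.Pcongr μ X fun j h1 h2 => ?_
          simp only [hu_def, hi'_def]
          congr 1
          omega
        rw [e1, ← ih (i-1) s hba]
      have piece3 : OneDepRev.P μ X m (Function.update u i' false)
          = OneDepRev.P μ X m (Function.update s i false) := by
        have e1 : OneDepRev.P μ X m (Function.update u i' false)
            = OneDepRev.P μ X m (fun j => Function.update s i false (m + 1 - j)) := by
          refine OneDepRev.Pcongr μ X fun j h1 h2 => ?_
          by_cases hj : j = i'
          · subst hj
            rw [Function.update_self, show m + 1 - i' = i by omega, Function.update_self]
          · rw [Function.update_of_ne hj, Function.update_of_ne (by omega), hu_def]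
        rw [e1, ← ih m (Function.update s i false) hbc]
      rw [piece1, piece2, piece3, mul_comm] at key2
      rw [← key1] at key2
      have hfin : OneDepRev.P μ X m (Function.update s i false) ≠ ⊤ := by
        unfold OneDepRev.P
        exact measure_ne_top μ _
      exact (WithTop.add_right_cancel hfin key2).symm
    · push_neg at hex
      refine OneDepRev.Pcongr μ X fun j h1 h2 => ?_
      have e1 := hex j h1 h2
      have e2 := hex (m + 1 - j) (by omega) (by omega)
      rw [Bool.eq_false_iff.mpr e1, Bool.eq_false_iff.mpr e2]
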